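/- For every n ≥ 1, the n-dimensional hypercube Q_n = Cay(C₂ⁿ, S) (S a basis of C₂ⁿ) is a normal Cayley graph, i.e., the right regular representation R(C₂ⁿ) is a normal subgroup of Aut(Q_n). -/

import Mathlib

/-- The Cayley graph of an additive group `G` with respect to a connection set `S`. -/
def addCayley (G : Type*) [AddGroup G] (S : Set G) : SimpleGraph G :=
  SimpleGraph.fromRel (fun g h => h - g ∈ S)

namespace HypercubeAux

variable {n : ℕ}

abbrev G (n : ℕ) := Fin n → ZMod 2

lemma add_self (z : G n) : z + z = 0 := by
  funext i
  have : ∀ a : ZMod 2, a + a = 0 := by decide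
  exact this (z i)

lemma neg_eq (z : G n) : -z = z := by
  funext i
  have : ∀ a : ZMod 2, -a = a := by decide
  exact this (z i)

lemma sub_eq_add (x y : G n) : x - y = x + y := by
  rw [sub_eq_add_neg, neg_eq]

/-- linear independence: if `b p + b q = b r + b s`, `p ≠ q`, `p ≠ r`, then `p = s`. -/
lemma indep_lemma (b : Module.Basis (Fin n) (ZMod 2) (G n)) {p q r s : Fin n}
    (h : b p + b q = b r + b s) (hpq : p ≠ q) (hpr : p ≠ r) : p = s := by
  by_contra hps
  set g : Fin n → ZMod 2 := fun i =>
    (if i = p then 1 else 0) + (if i = q then 1 else 0) +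
    ((if i = r then 1 else 0) + (if i = s then 1 else 0)) with hg
  have hsum : ∑ i, g i • b i = 0 := by
    have : ∑ i, g i • b i = b p + b q + (b r + b s) := by
      simp only [hg, add_smul, ite_smul, one_smul, zero_smul]
      rw [Finset.sum_add_distrib, Finset.sum_add_distrib, Finset.sum_add_distrib]
      simp
    rw [this, h, ← sub_eq_add (b r + b s), sub_self]
  have hz := Fintype.linearIndependent_iff.mp b.linearIndependent g hsum p
  simp only [hg, if_pos rfl, if_neg hpq, if_neg hpr, if_neg hps] at hz
  exact absurd hz (by decide)

variable {S : Set (G n)}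

lemma adj_iff {x y : G n} : (addCayley (G n) S).Adj x y ↔ x ≠ y ∧ y - x ∈ S := by
  rw [addCayley, SimpleGraph.fromRel_adj]
  constructor
  · rintro ⟨hne, h | h⟩
    · exact ⟨hne, h⟩
    · refine ⟨hne, ?_⟩
      rwa [sub_eq_add, add_comm, ← sub_eq_add] at h
  · rintro ⟨hne, h⟩; exact ⟨hne, Or.inl h⟩

variable (b : Module.Basis (Fin n) (ZMod 2) (G n)) (hS : S = Set.range b)
variable (σ : addCayley (G n) S ≃g addCayley (G n) S)
include hS

/-- In any 4-cycle configuration the "direction" is constant: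
`σ(x + bᵢ) + σ x` is unchanged when `x` moves by `b k`. -/
lemma step (i k : Fin n) (x : G n) :
    σ (x + b k + b i) + σ (x + b k) = σ (x + b i) + σ x := by
  by_cases hki : k = i
  · subst hki
    rw [add_assoc, add_self, add_zero, add_comm]
  · -- 4-cycle argument
    have hbne : ∀ {j l : Fin n}, j ≠ l → b j ≠ b l := fun h hb => h (b.injective hb)
    have hb0 : ∀ j : Fin n, b j ≠ 0 := fun j => b.ne_zero j
    have hadj : ∀ (y : G n) (j : Fin n), (addCayley (G n) S).Adj y (y + b j) := by
      intro y j
      rw [adj_iff]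
      constructor
      · intro h; exact hb0 j (by simpa using h.symm)
      · rw [hS]; simp [sub_eq_add, add_comm y (b j), add_assoc, add_self]
    -- the four image vertices
    set u := σ x with hu
    set u' := σ (x + b i) with hu'
    set w := σ (x + b k) with hw
    set w' := σ (x + b k + b i) with hw'
    -- adjacencies of images
    have h1 : (addCayley (G n) S).Adj u u' := σ.map_adj_iff.mpr (hadj x i)
    have h2 : (addCayley (G n) S).Adj u w := σ.map_adj_iff.mpr (hadj x k)
    have h3 : (addCayley (G n) S).Adj w w' := σ.map_adj_iff.mpr (hadj (x + b k) i)
    have h4 : (addCayley (G n) S).Adj u' w' := by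
      refine σ.map_adj_iff.mpr ?_
      have := hadj (x + b i) k
      rwa [show x + b i + b k = x + b k + b i by ring] at this
    rw [adj_iff, hS] at h1 h2 h3 h4
    obtain ⟨hne1, p, hp⟩ := h1
    obtain ⟨hne2, r, hr⟩ := h2
    obtain ⟨hne3, s, hs⟩ := h3
    obtain ⟨hne4, q, hq⟩ := h4
    -- relation: b p + b q = b r + b s
    have hrel : b p + b q = b r + b s := by
      rw [hp, hq, hr, hs]
      rw [sub_eq_add, sub_eq_add, sub_eq_add, sub_eq_add]
      have : u' + u + (w' + u') = w + u + (w' + w) := by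
        rw [show u' + u + (w' + u') = w' + u + (u' + u') by ring, add_self,
          show w + u + (w' + w) = w' + u + (w + w) by ring, add_self]
      linear_combination this
    have hinj : Function.Injective σ := σ.injective
    -- p ≠ q : otherwise w' = u
    have hpq : p ≠ q := by
      intro hpq
      have : u' - u = w' - u' := by rw [← hp, ← hq, hpq]
      have hw'u : w' = u := by
        have h2 : u' + u = w' + u' := by
          rw [sub_eq_add, sub_eq_add] at this; exact this
        have := congrArg (· + u') h2
        beta_reduce at this
        rw [show u' + u + u' = u + (u' + u') by ring, add_self, add_zero,
          show w' + u' + u' = w' + (u' + u') by ring, add_self, add_zero] at this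
        exact this.symm
      have : x + b k + b i = x := hinj (by rw [← hw', ← hu, hw'u])
      have : b k = b i := by
        have h' : b k + b i = 0 := by
          have := congrArg (· - x) this
          simpa [sub_eq_add, add_comm, add_assoc, add_left_comm, add_self] using this
        have := congrArg (· + b i) h'
        simpa [add_assoc, add_self] using this
      exact hki (b.injective this)
    -- p ≠ r : otherwise u' = w
    have hpr : p ≠ r := by
      intro hpr
      have : u' - u = w - u := by rw [← hp, ← hr, hpr]
      have : u' = w := by
        have := congrArg (· + u) this
        simpa [sub_eq_add, add_assoc, add_self] using this
      have : x + b i = x + b k := hinj (by rw [← hu', ← hw, this])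
      exact hki (b.injective (by simpa using this)).symm
    have hps : p = s := indep_lemma b hrel hpq hpr
    -- conclude : w' - w = u' - u
    have : w' - w = u' - u := by rw [← hs, ← hp, hps]
    rw [sub_eq_add, sub_eq_add] at this
    exact this

/-- the difference function is translation invariant in all directions. -/
lemma const_dir (i : Fin n) (v x : G n) :
    σ (x + v + b i) + σ (x + v) = σ (x + b i) + σ x := by
  let T : Submodule (ZMod 2) (G n) :=
    { carrier := {v | ∀ x, σ (x + v + b i) + σ (x + v) = σ (x + b i) + σ x}
      add_mem' := by
        intro a c ha hc x
        have h1 := hc (x + a)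
        have h2 := ha x
        rw [show x + (a + c) = x + a + c by ring]
        rw [h1, h2]
      zero_mem' := by intro x; simp
      smul_mem' := by
        intro c a ha
        have h2 : ∀ c : ZMod 2, c = 0 ∨ c = 1 := by decide
        rcases h2 c with h | h <;> subst h
        · simpa using (fun x => by simp : ∀ x : G n, σ (x + 0 + b i) + σ (x + 0) = σ (x + b i) + σ x)
        · simpa using ha }
  have hT : ∀ w ∈ Set.range b, w ∈ T := by
    rintro _ ⟨k, rfl⟩ x
    exact step b hS σ i k x
  have : T = ⊤ := by
    rw [← top_le_iff, ← b.span_eq]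
    exact Submodule.span_le.mpr hT
  exact (this ▸ Submodule.mem_top (x := v) : v ∈ T) x

/-- every direction translates uniformly under σ. -/
lemma translate (v : G n) : ∃ w : G n, ∀ x, σ (x + v) = σ x + w := by
  let T : Submodule (ZMod 2) (G n) :=
    { carrier := {v | ∃ w : G n, ∀ x, σ (x + v) = σ x + w}
      add_mem' := by
        rintro a c ⟨wa, ha⟩ ⟨wc, hc⟩
        exact ⟨wa + wc, fun x => by
          rw [show x + (a + c) = x + a + c by ring, hc, ha, add_assoc]⟩
      zero_mem' := ⟨0, fun x => by simp⟩
      smul_mem' := by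
        rintro c a ⟨wa, ha⟩
        have h2 : ∀ c : ZMod 2, c = 0 ∨ c = 1 := by decide
        rcases h2 c with h | h <;> subst h
        · exact ⟨0, fun x => by simp⟩
        · exact ⟨wa, by simpa using ha⟩ }
  have hT : ∀ w ∈ Set.range b, w ∈ T := by
    rintro _ ⟨i, rfl⟩
    refine ⟨σ (b i) + σ 0, fun x => ?_⟩
    have h := const_dir b hS σ i x 0
    rw [zero_add] at h
    have := congrArg (· + σ x) h
    beta_reduce at this
    rw [show σ (x + b i) + σ x + σ x = σ (x + b i) + (σ x + σ x) by ring, add_self,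
      add_zero] at this
    rw [show (0 : G n) + b i = b i by simp] at this
    rw [this]; ring
  have : T = ⊤ := by
    rw [← top_le_iff, ← b.span_eq]
    exact Submodule.span_le.mpr hT
  exact (this ▸ Submodule.mem_top (x := v) : v ∈ T)

/-- the translation automorphism. -/
def trans (S : Set (G n)) (v : G n) : addCayley (G n) S ≃g addCayley (G n) S where
  toEquiv := Equiv.addRight v
  map_rel_iff' := by
    intro x y
    simp only [Equiv.coe_addRight]
    rw [adj_iff, adj_iff]
    constructor
    · rintro ⟨hne, h⟩
      refine ⟨fun hxy => hne (by rw [hxy]), ?_⟩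
      rwa [show y + v - (x + v) = y - x by ring] at h
    · rintro ⟨hne, h⟩
      refine ⟨fun hxy => hne (by simpa using hxy), ?_⟩
      rwa [show y + v - (x + v) = y - x by ring]

end HypercubeAux

theorem hypercube_normal_cayley (n : ℕ) (hn : 1 ≤ n)
    (b : Module.Basis (Fin n) (ZMod 2) (Fin n → ZMod 2)) (S : Set (Fin n → ZMod 2))
    (hS : S = Set.range b) :
    ∃ τ : Multiplicative (Fin n → ZMod 2) →*
        (addCayley (Fin n → ZMod 2) S ≃g addCayley (Fin n → ZMod 2) S),
      (∀ (v x : Fin n → ZMod 2), τ (Multiplicative.ofAdd v) x = x + v) ∧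
      τ.range.Normal := by
  refine ⟨MonoidHom.mk' (fun v => HypercubeAux.trans S v.toAdd) ?_, fun v x => rfl, ?_⟩
  · intro a c
    refine RelIso.ext fun x => ?_
    show x + (a.toAdd + c.toAdd) = (x + c.toAdd) + a.toAdd
    ring
  · constructor
    rintro g ⟨v, rfl⟩ σ
    obtain ⟨w, hw⟩ := HypercubeAux.translate b hS σ v.toAdd
    refine ⟨Multiplicative.ofAdd w, ?_⟩
    refine RelIso.ext fun x => ?_
    show x + w = σ (σ.symm x + v.toAdd)
    rw [hw, σ.apply_symm_apply]
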